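/- Let a, b, c, d be real quaternions with (c,d) ≠ (0,0) and let A = [[a,b],[c,d]]. Then det_ℍ(A) = 0 if and only if the fractional linear map is constant, i.e. there exists k ∈ ℍ such that (a·q + b)·(c·q + d)⁻¹ = k for every q ∈ ℍ with c·q + d ≠ 0. -/

import Mathlib

open scoped Quaternion
open Quaternion

/-- The Dieudonné determinant of a 2×2 quaternionic matrix. -/
noncomputable def detH (A : Matrix (Fin 2) (Fin 2) ℍ[ℝ]) : ℝ :=
  Real.sqrt (‖A 0 0‖ ^ 2 * ‖A 1 1‖ ^ 2 + ‖A 1 0‖ ^ 2 * ‖A 0 1‖ ^ 2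
    - 2 * (A 1 0 * star (A 0 0) * A 0 1 * star (A 1 1)).re)

private noncomputable def Eq4 (a b c d : ℍ[ℝ]) : ℝ :=
  normSq a * normSq d + normSq c * normSq b - 2 * (c * star a * b * star d).re

private lemma key (a b c d : ℍ[ℝ]) :
    normSq c * Eq4 a b c d = normSq (((normSq c : ℝ) : ℍ[ℝ]) * b - a * star c * d) := by
  simp only [Eq4, normSq_def', Quaternion.re_mul, Quaternion.imI_mul, Quaternion.imJ_mul,
    Quaternion.imK_mul, Quaternion.re_sub, Quaternion.imI_sub, Quaternion.imJ_sub,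
    Quaternion.imK_sub, Quaternion.re_star, Quaternion.imI_star, Quaternion.imJ_star,
    Quaternion.imK_star, Quaternion.re_coe, Quaternion.imI_coe, Quaternion.imJ_coe,
    Quaternion.imK_coe]
  ring

private lemma Ezero (k c d : ℍ[ℝ]) : Eq4 (k*c) (k*d) c d = 0 := by
  simp only [Eq4, normSq_def', Quaternion.re_mul, Quaternion.imI_mul, Quaternion.imJ_mul,
    Quaternion.imK_mul, Quaternion.re_star, Quaternion.imI_star, Quaternion.imJ_star,
    Quaternion.imK_star]
  ring

private lemma Eczero (a b d : ℍ[ℝ]) : Eq4 a b 0 d = normSq a * normSq d := by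
  simp [Eq4]

private lemma E_nonneg (a b c d : ℍ[ℝ]) : 0 ≤ Eq4 a b c d := by
  by_cases hc : c = 0
  · rw [hc, Eczero]; exact mul_nonneg normSq_nonneg normSq_nonneg
  · have h1 : 0 < normSq c :=
      lt_of_le_of_ne normSq_nonneg (fun h0 => hc (normSq_eq_zero.1 h0.symm))
    nlinarith [key a b c d,
      (normSq_nonneg : (0:ℝ) ≤ normSq (((normSq c : ℝ) : ℍ[ℝ]) * b - a * star c * d))]

private lemma E_eq_zero_iff (a b c d : ℍ[ℝ]) (h : ¬(c = 0 ∧ d = 0)) :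
    Eq4 a b c d = 0 ↔ ∃ k : ℍ[ℝ], a = k * c ∧ b = k * d := by
  constructor
  · intro hE
    by_cases hc : c = 0
    · have hd : d ≠ 0 := fun hd => h ⟨hc, hd⟩
      rw [hc, Eczero] at hE
      have ha : a = 0 := by
        rcases mul_eq_zero.1 hE with h' | h'
        · exact normSq_eq_zero.1 h'
        · exact absurd (normSq_eq_zero.1 h') hd
      exact ⟨b * d⁻¹, by simp [ha, hc], by rw [mul_assoc, inv_mul_cancel₀ hd, mul_one]⟩
    · have h1 : normSq c ≠ 0 := fun h0 => hc (normSq_eq_zero.1 h0)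
      have hw : ((normSq c : ℝ) : ℍ[ℝ]) * b - a * star c * d = 0 := by
        have := key a b c d
        rw [hE, mul_zero] at this
        exact normSq_eq_zero.1 this.symm
      have hw' : ((normSq c : ℝ) : ℍ[ℝ]) * b = a * star c * d := by
        linear_combination (norm := module) hw
      refine ⟨a * c⁻¹, by rw [mul_assoc, inv_mul_cancel₀ hc, mul_one], ?_⟩
      have hstar : (star c : ℍ[ℝ]) = c⁻¹ * ((normSq c : ℝ) : ℍ[ℝ]) := by
        rw [← self_mul_star c, ← mul_assoc, inv_mul_cancel₀ hc, one_mul]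
      have hcomm : ∀ x : ℍ[ℝ], ((normSq c : ℝ) : ℍ[ℝ]) * x = x * ((normSq c : ℝ) : ℍ[ℝ]) :=
        fun x => (Quaternion.coe_mul_eq_smul _ _).trans (Quaternion.mul_coe_eq_smul _ _).symm
      have hne : ((normSq c : ℝ) : ℍ[ℝ]) ≠ 0 := by
        rw [ne_eq, ← Quaternion.coe_zero, Quaternion.coe_inj]; exact h1
      apply mul_left_cancel₀ hne
      rw [hw', hstar, Quaternion.coe_commutes]
      simp only [mul_assoc, Quaternion.coe_commutes]
  · rintro ⟨k, rfl, rfl⟩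
    exact Ezero k c d

/-- The fractional linear map `q ↦ (aq+b)(cq+d)⁻¹` is constant if and only if the
Dieudonné determinant of `[[a,b],[c,d]]` vanishes. -/
theorem detH_eq_zero_iff_constant (a b c d : ℍ[ℝ]) (h : ¬(c = 0 ∧ d = 0)) :
    detH !![a, b; c, d] = 0 ↔
      ∃ k : ℍ[ℝ], ∀ q : ℍ[ℝ], c * q + d ≠ 0 → (a * q + b) * (c * q + d)⁻¹ = k := by
  have hdet : detH !![a, b; c, d] = Real.sqrt (Eq4 a b c d) := by
    simp [detH, Eq4, pow_two, ← normSq_eq_norm_mul_self, Matrix.cons_val_one, Matrix.head_cons]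
  rw [hdet, Real.sqrt_eq_zero (E_nonneg a b c d), E_eq_zero_iff a b c d h]
  constructor
  · rintro ⟨k, rfl, rfl⟩
    refine ⟨k, fun q hq => ?_⟩
    rw [mul_assoc, ← mul_add, mul_assoc, mul_inv_cancel₀ hq, mul_one]
  · rintro ⟨k, hk⟩
    obtain ⟨q₁, q₂, hne, h1, h2⟩ :
        ∃ q₁ q₂ : ℍ[ℝ], q₁ - q₂ ≠ 0 ∧ c * q₁ + d ≠ 0 ∧ c * q₂ + d ≠ 0 := by
      have hc2 : ((2:ℝ):ℍ[ℝ]) ≠ 0 := by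
        rw [ne_eq, ← Quaternion.coe_zero, Quaternion.coe_inj]; norm_num
      by_cases hd0 : d = 0
      · have hc0 : c ≠ 0 := fun hc0 => h ⟨hc0, hd0⟩
        refine ⟨1, ((2:ℝ):ℍ[ℝ]), ?_, ?_, ?_⟩
        · rw [← Quaternion.coe_one, ← Quaternion.coe_sub, ne_eq, ← Quaternion.coe_zero,
            Quaternion.coe_inj]
          norm_num
        · simpa [hd0] using hc0
        · rw [hd0, add_zero]; exact mul_ne_zero hc0 hc2
      · by_cases hq1 : c * 1 + d = 0
        · refine ⟨0, ((2:ℝ):ℍ[ℝ]), ?_, by simpa using hd0, ?_⟩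
          · rw [zero_sub, neg_ne_zero]; exact hc2
          · intro h2'
            have hcc : c = 0 := by
              have hz : c * ((2:ℝ):ℍ[ℝ]) + d - (c * 1 + d) = 0 := by
                rw [h2', hq1, sub_zero]
              have h2e : ((2:ℝ):ℍ[ℝ]) = 1 + 1 := by
                rw [show (2:ℝ) = 1+1 by norm_num, Quaternion.coe_add, Quaternion.coe_one]
              rw [h2e] at hz
              rwa [show c * ((1:ℍ[ℝ])+1) + d - (c*1+d) = c by noncomm_ring] at hz
            rw [hcc, zero_mul, zero_add] at hq1; exact hd0 hq1
        · exact ⟨0, 1, by norm_num, by simpa using hd0, hq1⟩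
    have e1 : a * q₁ + b = k * c * q₁ + k * d := by
      have h' : a * q₁ + b = k * (c * q₁ + d) := by
        rw [← hk q₁ h1, mul_assoc, inv_mul_cancel₀ h1, mul_one]
      rw [h', mul_add, ← mul_assoc]
    have e2 : a * q₂ + b = k * c * q₂ + k * d := by
      have h' : a * q₂ + b = k * (c * q₂ + d) := by
        rw [← hk q₂ h2, mul_assoc, inv_mul_cancel₀ h2, mul_one]
      rw [h', mul_add, ← mul_assoc]
    have ha : a = k * c := by
      have hsub : (a - k * c) * (q₁ - q₂) = 0 := by
        calc (a - k * c) * (q₁ - q₂)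
            = (a * q₁ + b) - (k * c * q₁ + k * d)
              - ((a * q₂ + b) - (k * c * q₂ + k * d)) := by noncomm_ring
          _ = 0 := by rw [e1, e2]; simp
      rcases mul_eq_zero.1 hsub with h' | h'
      · exact sub_eq_zero.1 h'
      · exact absurd h' hne
    refine ⟨k, ha, ?_⟩
    rw [ha] at e1
    exact add_left_cancel e1
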